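/- For every element w of the Weyl group W(E₇), the inner product ⟨û₂, w(û₇)⟩ lies in the set {1/√3, 0, −1/√3}. (Equivalently: the distance between a vertex of type 2 and a vertex of type 7 of the Coxeter complex of type E₇ is one of arccos(1/√3), π/2, arccos(−1/√3).) -/

import Mathlib

noncomputable section

open scoped RealInnerProductSpace

/-- Euclidean space `ℝ⁸`. -/
abbrev E8Space := EuclideanSpace ℝ (Fin 8)

/-- The fundamental root vectors of the root system of type `E₇` inside `ℝ⁸`:
`r₁ = ½(1,1,1,−1,−1,−1,−1,−1)`, `rᵢ = eᵢ − eᵢ₋₁` for `2 ≤ i ≤ 6`, and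
`r₇ = ½(1,1,1,1,1,−1,1,1)` (here indexed by `Fin 7`, with `j = 0` corresponding
to `r₁` and `j = 6` to `r₇`). -/
def E7root : Fin 7 → E8Space := fun j =>
  if j = 0 then WithLp.toLp 2 (fun i => if (i : ℕ) < 3 then (1 : ℝ) / 2 else -(1 / 2))
  else if j = 6 then WithLp.toLp 2 (fun i => if (i : ℕ) = 5 then -(1 : ℝ) / 2 else 1 / 2)
  else WithLp.toLp 2 (fun i => if (i : ℕ) = (j : ℕ) then (1 : ℝ)
        else if (i : ℕ) + 1 = (j : ℕ) then -1 else 0)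

/-- The Weyl group `W(E₇)`: the subgroup of linear isometries of `ℝ⁸` generated by the
reflections `s_r(x) = x − 2(⟨x,r⟩/⟨r,r⟩)r` in the fundamental root vectors of type `E₇`.
These generators preserve the subspace `V = {x : x₇ = x₈}` realizing the Coxeter
complex of type `E₇`. -/
def WeylE7 : Subgroup (E8Space ≃ₗᵢ[ℝ] E8Space) :=
  Subgroup.closure
    { f | ∃ j : Fin 7, ∀ x : E8Space,
        f x = x - ((2 * ⟪x, E7root j⟫ / ⟪E7root j, E7root j⟫) • E7root j) }

/-- `û₂ = (−1,1,1,1,1,1,−1,−1)/(2√2)`, a unit vector representing a vertex of type 2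
of the Coxeter complex of type `E₇`. -/
def u2hatE7 : E8Space := WithLp.toLp 2 (fun i =>
  (if (i : ℕ) = 0 ∨ 6 ≤ (i : ℕ) then -1 else 1) / (2 * Real.sqrt 2))

/-- `û₇ = (1,1,1,1,1,1,0,0)/√6`, a unit vector representing a vertex of type 7
of the Coxeter complex of type `E₇`. -/
def u7hatE7 : E8Space := WithLp.toLp 2 (fun i => (if (i : ℕ) < 6 then 1 else 0) / Real.sqrt 6)

/-! ### Auxiliary integer-vector machinery -/

/-- Embedding of integer vectors into `E8Space`. -/
def embZ (q : Fin 8 → ℤ) : E8Space := WithLp.toLp 2 (fun i => (q i : ℝ))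

/-- Integer versions of the doubled root vectors `2 rⱼ`. -/
def rootZ : Fin 7 → Fin 8 → ℤ := fun j =>
  if j = 0 then (fun i => if (i : ℕ) < 3 then 1 else -1)
  else if j = 6 then (fun i => if (i : ℕ) = 5 then -1 else 1)
  else (fun i => if (i : ℕ) = (j : ℕ) then 2
        else if (i : ℕ) + 1 = (j : ℕ) then -2 else 0)

/-- Explicit integer inner product on 8-vectors. -/
def ipZ (a b : Fin 8 → ℤ) : ℤ :=
  a 0 * b 0 + a 1 * b 1 + a 2 * b 2 + a 3 * b 3 + a 4 * b 4 + a 5 * b 5 +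
    a 6 * b 6 + a 7 * b 7

/-- The orbit of `√6 · û₇` under `W(E₇)`, as integer vectors. -/
def orbitL : List (Fin 8 → ℤ) := [
  ![-2, 0, 0, 0, 0, 0, -1, -1],
  ![-2, 0, 0, 0, 0, 0, 1, 1],
  ![-1, -1, -1, -1, -1, -1, 0, 0],
  ![-1, -1, -1, -1, 1, 1, 0, 0],
  ![-1, -1, -1, 1, -1, 1, 0, 0],
  ![-1, -1, -1, 1, 1, -1, 0, 0],
  ![-1, -1, 1, -1, -1, 1, 0, 0],
  ![-1, -1, 1, -1, 1, -1, 0, 0],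
  ![-1, -1, 1, 1, -1, -1, 0, 0],
  ![-1, -1, 1, 1, 1, 1, 0, 0],
  ![-1, 1, -1, -1, -1, 1, 0, 0],
  ![-1, 1, -1, -1, 1, -1, 0, 0],
  ![-1, 1, -1, 1, -1, -1, 0, 0],
  ![-1, 1, -1, 1, 1, 1, 0, 0],
  ![-1, 1, 1, -1, -1, -1, 0, 0],
  ![-1, 1, 1, -1, 1, 1, 0, 0],
  ![-1, 1, 1, 1, -1, 1, 0, 0],
  ![-1, 1, 1, 1, 1, -1, 0, 0],
  ![0, -2, 0, 0, 0, 0, -1, -1],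
  ![0, -2, 0, 0, 0, 0, 1, 1],
  ![0, 0, -2, 0, 0, 0, -1, -1],
  ![0, 0, -2, 0, 0, 0, 1, 1],
  ![0, 0, 0, -2, 0, 0, -1, -1],
  ![0, 0, 0, -2, 0, 0, 1, 1],
  ![0, 0, 0, 0, -2, 0, -1, -1],
  ![0, 0, 0, 0, -2, 0, 1, 1],
  ![0, 0, 0, 0, 0, -2, -1, -1],
  ![0, 0, 0, 0, 0, -2, 1, 1],
  ![0, 0, 0, 0, 0, 2, -1, -1],
  ![0, 0, 0, 0, 0, 2, 1, 1],
  ![0, 0, 0, 0, 2, 0, -1, -1],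
  ![0, 0, 0, 0, 2, 0, 1, 1],
  ![0, 0, 0, 2, 0, 0, -1, -1],
  ![0, 0, 0, 2, 0, 0, 1, 1],
  ![0, 0, 2, 0, 0, 0, -1, -1],
  ![0, 0, 2, 0, 0, 0, 1, 1],
  ![0, 2, 0, 0, 0, 0, -1, -1],
  ![0, 2, 0, 0, 0, 0, 1, 1],
  ![1, -1, -1, -1, -1, 1, 0, 0],
  ![1, -1, -1, -1, 1, -1, 0, 0],
  ![1, -1, -1, 1, -1, -1, 0, 0],
  ![1, -1, -1, 1, 1, 1, 0, 0],
  ![1, -1, 1, -1, -1, -1, 0, 0],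
  ![1, -1, 1, -1, 1, 1, 0, 0],
  ![1, -1, 1, 1, -1, 1, 0, 0],
  ![1, -1, 1, 1, 1, -1, 0, 0],
  ![1, 1, -1, -1, -1, -1, 0, 0],
  ![1, 1, -1, -1, 1, 1, 0, 0],
  ![1, 1, -1, 1, -1, 1, 0, 0],
  ![1, 1, -1, 1, 1, -1, 0, 0],
  ![1, 1, 1, -1, -1, 1, 0, 0],
  ![1, 1, 1, -1, 1, -1, 0, 0],
  ![1, 1, 1, 1, -1, -1, 0, 0],
  ![1, 1, 1, 1, 1, 1, 0, 0],
  ![2, 0, 0, 0, 0, 0, -1, -1],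
  ![2, 0, 0, 0, 0, 0, 1, 1]
]

/-- The orbit, scaled by 4. -/
def orbit4L : List (Fin 8 → ℤ) := orbitL.map (fun q i => 4 * q i)

lemma root_eq (j : Fin 7) : E7root j = (1 / 2 : ℝ) • embZ (rootZ j) := by
  ext i
  fin_cases j <;>
    simp only [E7root, rootZ, embZ, PiLp.smul_apply, smul_eq_mul, Fin.isValue,
      show ((0:Fin 7) = 0) = True by simp, show ((1:Fin 7) = 0) = False by decide,
      show ((2:Fin 7) = 0) = False by decide, show ((3:Fin 7) = 0) = False by decide,
      show ((4:Fin 7) = 0) = False by decide, show ((5:Fin 7) = 0) = False by decide,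
      show ((6:Fin 7) = 0) = False by decide, show ((1:Fin 7) = 6) = False by decide,
      show ((2:Fin 7) = 6) = False by decide, show ((3:Fin 7) = 6) = False by decide,
      show ((4:Fin 7) = 6) = False by decide, show ((5:Fin 7) = 6) = False by decide,
      show ((6:Fin 7) = 6) = True by simp, if_true, if_false, PiLp.toLp_apply] <;>
    norm_num <;> (try (split_ifs <;> push_cast <;> norm_num))

lemma inner_embZ (a b : Fin 8 → ℤ) : ⟪embZ a, embZ b⟫ = ((ipZ a b : ℤ) : ℝ) := by
  simp [embZ, ipZ, PiLp.inner_apply, Fin.sum_univ_eight]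
  try push_cast
  try ring

lemma ipZ_root_root : ∀ j : Fin 7, ipZ (rootZ j) (rootZ j) = 8 := by decide

lemma refl_mem : ∀ j : Fin 7, ∀ q ∈ orbitL,
    (fun i => 4 * q i - ipZ q (rootZ j) * rootZ j i) ∈ orbit4L := by decide

lemma ipZ_u2 : ∀ q ∈ orbitL,
    ipZ ![-1, 1, 1, 1, 1, 1, -1, -1] q = 4 ∨ ipZ ![-1, 1, 1, 1, 1, 1, -1, -1] q = 0 ∨
      ipZ ![-1, 1, 1, 1, 1, 1, -1, -1] q = -4 := by decide

/-- The orbit as a set of real vectors. -/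
def orbitS : Set E8Space :=
  {v | ∃ q ∈ orbitL, v = (Real.sqrt 6)⁻¹ • embZ q}

lemma inner_root (j : Fin 7) (x : E8Space) :
    ⟪x, E7root j⟫ • E7root j = ((1 / 4 : ℝ) * ⟪x, embZ (rootZ j)⟫) • embZ (rootZ j) := by
  rw [root_eq, real_inner_smul_right, smul_smul]
  congr 1
  ring

lemma inner_root_root (j : Fin 7) : ⟪E7root j, E7root j⟫ = (2 : ℝ) := by
  rw [root_eq, real_inner_smul_left, real_inner_smul_right, inner_embZ, ipZ_root_root]
  norm_num

lemma refl_formula (f : E8Space ≃ₗᵢ[ℝ] E8Space) (j : Fin 7)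
    (hf : ∀ x : E8Space, f x = x - ((2 * ⟪x, E7root j⟫ / ⟪E7root j, E7root j⟫) • E7root j))
    (x : E8Space) : f x = x - ⟪x, E7root j⟫ • E7root j := by
  rw [hf x, inner_root_root]
  congr 2
  ring

lemma refl_invol (f : E8Space ≃ₗᵢ[ℝ] E8Space) (j : Fin 7)
    (hf : ∀ x : E8Space, f x = x - ((2 * ⟪x, E7root j⟫ / ⟪E7root j, E7root j⟫) • E7root j))
    (x : E8Space) : f (f x) = x := by
  rw [refl_formula f j hf, refl_formula f j hf, inner_sub_left, real_inner_smul_left,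
    inner_root_root]
  module

lemma refl_maps_orbit (f : E8Space ≃ₗᵢ[ℝ] E8Space) (j : Fin 7)
    (hf : ∀ x : E8Space, f x = x - ((2 * ⟪x, E7root j⟫ / ⟪E7root j, E7root j⟫) • E7root j))
    (v : E8Space) (hv : v ∈ orbitS) : f v ∈ orbitS := by
  obtain ⟨q, hq, rfl⟩ := hv
  have h4 := refl_mem j q hq
  rw [orbit4L, List.mem_map] at h4
  obtain ⟨q', hq', hqq'⟩ := h4
  refine ⟨q', hq', ?_⟩
  have key : ∀ i : Fin 8, ((4 * q i - ipZ q (rootZ j) * rootZ j i : ℤ) : ℝ)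
      = 4 * (q' i : ℝ) := by
    intro i
    rw [← congrFun hqq' i]
    push_cast
    ring
  rw [refl_formula f j hf, inner_root, real_inner_smul_left, inner_embZ]
  ext i
  have hk := key i
  push_cast at hk
  simp only [PiLp.sub_apply, PiLp.smul_apply, smul_eq_mul, embZ, PiLp.toLp_apply]
  have hq'i : (q' i : ℝ) = (q i : ℝ) - (ipZ q (rootZ j) : ℝ) * (rootZ j i : ℝ) / 4 := by
    linarith
  rw [hq'i]
  ring

lemma orbit_stable (w : E8Space ≃ₗᵢ[ℝ] E8Space) (hw : w ∈ WeylE7) :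
    ∀ v ∈ orbitS, w v ∈ orbitS ∧ w.symm v ∈ orbitS := by
  induction hw using Subgroup.closure_induction with
  | mem f hf =>
    obtain ⟨j, hj⟩ := hf
    intro v hv
    refine ⟨refl_maps_orbit f j hj v hv, ?_⟩
    have h1 : f v ∈ orbitS := refl_maps_orbit f j hj v hv
    have h2 : f.symm v = f v := by
      conv_lhs => rw [← refl_invol f j hj v]
      exact f.symm_apply_apply (f v)
    rw [h2]; exact h1
  | one => intro v hv; simpa using ⟨hv, hv⟩
  | mul f g _ _ hf hg =>
    intro v hv
    constructor
    · have : (f * g) v = f (g v) := rfl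
      rw [this]
      exact (hf _ (hg v hv).1).1
    · have : (f * g).symm v = g.symm (f.symm v) := rfl
      rw [this]
      exact (hg _ (hf v hv).2).2
  | inv f _ hf =>
    intro v hv
    constructor
    · have : f⁻¹ v = f.symm v := rfl
      rw [this]; exact (hf v hv).2
    · have : (f⁻¹).symm v = f v := rfl
      rw [this]; exact (hf v hv).1

lemma u7_mem : u7hatE7 ∈ orbitS := by
  refine ⟨![1, 1, 1, 1, 1, 1, 0, 0], by decide, ?_⟩
  ext i
  simp only [u7hatE7, embZ, PiLp.smul_apply, smul_eq_mul, PiLp.toLp_apply]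
  fin_cases i <;> norm_num [div_eq_inv_mul]

lemma u2_eq : u2hatE7 = (2 * Real.sqrt 2)⁻¹ • embZ ![-1, 1, 1, 1, 1, 1, -1, -1] := by
  ext i
  simp only [u2hatE7, embZ, PiLp.smul_apply, smul_eq_mul, PiLp.toLp_apply]
  fin_cases i <;> norm_num [div_eq_inv_mul]

lemma sqrt_calc : (2 * Real.sqrt 2)⁻¹ * (Real.sqrt 6)⁻¹ * 4 = 1 / Real.sqrt 3 := by
  have h26 : Real.sqrt 2 * Real.sqrt 6 = 2 * Real.sqrt 3 := by
    rw [← Real.sqrt_mul (by norm_num)]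
    rw [show (2 : ℝ) * 6 = 4 * 3 by norm_num, Real.sqrt_mul (by norm_num),
      show Real.sqrt 4 = 2 by
        rw [show (4 : ℝ) = 2 ^ 2 by norm_num, Real.sqrt_sq (by norm_num)]]
  have h2 : Real.sqrt 2 ≠ 0 := by positivity
  have h3 : Real.sqrt 3 ≠ 0 := by positivity
  have h6 : Real.sqrt 6 ≠ 0 := by positivity
  field_simp
  nlinarith [h26]

theorem inner_u2hatE7_u7hatE7_orbit (w : E8Space ≃ₗᵢ[ℝ] E8Space) (hw : w ∈ WeylE7) :
    ⟪u2hatE7, w u7hatE7⟫ ∈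
      ({1 / Real.sqrt 3, 0, -(1 / Real.sqrt 3)} : Set ℝ) := by
  obtain ⟨q, hq, hv⟩ := (orbit_stable w hw u7hatE7 u7_mem).1
  rw [hv, u2_eq, real_inner_smul_left, real_inner_smul_right, inner_embZ]
  rcases ipZ_u2 q hq with h | h | h <;> rw [h]
  · left
    push_cast
    rw [show (2 * Real.sqrt 2)⁻¹ * ((Real.sqrt 6)⁻¹ * 4) =
      (2 * Real.sqrt 2)⁻¹ * (Real.sqrt 6)⁻¹ * 4 by ring, sqrt_calc]
  · right; left
    push_cast
    ring
  · right; right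
    push_cast
    rw [show (2 * Real.sqrt 2)⁻¹ * ((Real.sqrt 6)⁻¹ * (-4)) =
      -((2 * Real.sqrt 2)⁻¹ * (Real.sqrt 6)⁻¹ * 4) by ring, sqrt_calc]
    exact rfl
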